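/- Under the same setting, the kernel interpolant s_f (the minimum-norm interpolant to f ∈ H_K(Ω) at points X_n) satisfies the uniform bound sup_{x∈Ω} |f(x) − s_f(x)| ≤ 2‖f‖_{H_K(Ω)} (1 + Λ_φ(X_n)) sup_{y∈Ω} (Σ_{ℓ=n+1}^∞ φ_ℓ(y)^2)^{1/2}. -/

import Mathlib

open Finset

private lemma summable_abs_mul_sq {a b : ℕ → ℝ} (ha : Summable fun ℓ => a ℓ ^ 2)
    (hb : Summable fun ℓ => b ℓ ^ 2) : Summable fun ℓ => |a ℓ * b ℓ| := by
  refine Summable.of_nonneg_of_le (fun ℓ => abs_nonneg _) (fun ℓ => ?_)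
    ((ha.add hb).div_const 2)
  rw [abs_mul]
  nlinarith [sq_nonneg (|a ℓ| - |b ℓ|), sq_abs (a ℓ), sq_abs (b ℓ)]

private lemma tsum_cs {a b : ℕ → ℝ} (ha : Summable fun ℓ => a ℓ ^ 2)
    (hb : Summable fun ℓ => b ℓ ^ 2) :
    |∑' ℓ, a ℓ * b ℓ| ≤ Real.sqrt (∑' ℓ, a ℓ ^ 2) * Real.sqrt (∑' ℓ, b ℓ ^ 2) := by
  have habs := summable_abs_mul_sq ha hb
  have habs' : Summable fun ℓ => ‖a ℓ * b ℓ‖ := habs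
  have step1 : |∑' ℓ, a ℓ * b ℓ| ≤ ∑' ℓ, |a ℓ * b ℓ| := by
    have h := norm_tsum_le_tsum_norm habs'
    simp only [Real.norm_eq_abs] at h
    exact h
  refine step1.trans (habs.tsum_le_of_sum_le fun s => ?_)
  have e : ∑ ℓ ∈ s, |a ℓ * b ℓ| = ∑ ℓ ∈ s, |a ℓ| * |b ℓ| :=
    Finset.sum_congr rfl fun ℓ _ => abs_mul _ _
  have h2 := Finset.sum_mul_sq_le_sq_mul_sq s (fun ℓ => |a ℓ|) (fun ℓ => |b ℓ|)
  simp only [sq_abs] at h2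
  have hnn : 0 ≤ ∑ ℓ ∈ s, |a ℓ| * |b ℓ| :=
    Finset.sum_nonneg fun ℓ _ => mul_nonneg (abs_nonneg _) (abs_nonneg _)
  have key : ∑ ℓ ∈ s, |a ℓ| * |b ℓ| ≤
      Real.sqrt (∑ ℓ ∈ s, a ℓ ^ 2) * Real.sqrt (∑ ℓ ∈ s, b ℓ ^ 2) := by
    rw [← Real.sqrt_sq hnn, ← Real.sqrt_mul (Finset.sum_nonneg fun ℓ _ => sq_nonneg _)]
    exact Real.sqrt_le_sqrt h2
  rw [e]
  refine key.trans (mul_le_mul ?_ ?_ (Real.sqrt_nonneg _) (Real.sqrt_nonneg _))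
  · exact Real.sqrt_le_sqrt (ha.sum_le_tsum s (fun ℓ _ => sq_nonneg _))
  · exact Real.sqrt_le_sqrt (hb.sum_le_tsum s (fun ℓ _ => sq_nonneg _))

set_option maxHeartbeats 1000000 in
/-- Error bound for Lagrange interpolation of a single function in the basis. -/
private lemma single_err {X : Type*} (Ω : Set X) (φ : ℕ → X → ℝ)
    (hφ : ∀ x ∈ Ω, Summable (fun ℓ => (φ ℓ x) ^ 2))
    (n : ℕ) (pts : Fin n → X) (hpts : ∀ k, pts k ∈ Ω)
    (u : Fin n → X → ℝ)
    (hu_span : ∀ k, ∃ a : Fin n → ℝ, ∀ x, u k x = ∑ m, a m * φ (m : ℕ) x)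
    (hu_card : ∀ k m, u k (pts m) = if k = m then (1 : ℝ) else 0)
    (Λ S : ℝ)
    (hΛ : ∀ x ∈ Ω, ∑ k, |u k x| ≤ Λ)
    (hS : ∀ x ∈ Ω, Real.sqrt (∑' ℓ, (φ (n + ℓ) x) ^ 2) ≤ S)
    (g : X → ℝ) (d : ℕ → ℝ) (hd : Summable fun ℓ => d ℓ ^ 2)
    (hg : ∀ x ∈ Ω, HasSum (fun ℓ => d ℓ * φ ℓ x) (g x)) :
    ∀ x ∈ Ω, |g x - ∑ k, g (pts k) * u k x| ≤
      Real.sqrt (∑' ℓ, d ℓ ^ 2) * (1 + Λ) * S := by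
  intro x hx
  set M := Real.sqrt (∑' ℓ, d ℓ ^ 2) with hM
  have hS0 : 0 ≤ S := le_trans (Real.sqrt_nonneg _) (hS x hx)
  have hM0 : 0 ≤ M := Real.sqrt_nonneg _
  have hΛ0 : 0 ≤ Λ :=
    le_trans (Finset.sum_nonneg fun k _ => abs_nonneg _) (hΛ x hx)
  -- the tail function
  set t : X → ℝ := fun y => ∑' i, d (i + n) * φ (i + n) y with ht
  -- tail coefficient summability and bound
  have hdtail : Summable fun i => d (i + n) ^ 2 := (summable_nat_add_iff n).mpr hd
  have hdtail_le : Real.sqrt (∑' i, d (i + n) ^ 2) ≤ M := by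
    apply Real.sqrt_le_sqrt
    have := Summable.sum_add_tsum_nat_add n hd
    have hhead : 0 ≤ ∑ i ∈ Finset.range n, d i ^ 2 :=
      Finset.sum_nonneg fun i _ => sq_nonneg _
    linarith
  -- tail bound at each point of Ω
  have htail : ∀ y ∈ Ω, |t y| ≤ M * S := by
    intro y hy
    have hφtail : Summable fun i => φ (i + n) y ^ 2 := (summable_nat_add_iff n).mpr (hφ y hy)
    have := tsum_cs (a := fun i => d (i + n)) (b := fun i => φ (i + n) y) hdtail hφtail
    refine this.trans (mul_le_mul hdtail_le ?_ (Real.sqrt_nonneg _) hM0)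
    have heq : (∑' i, φ (i + n) y ^ 2) = ∑' i, φ (n + i) y ^ 2 :=
      tsum_congr fun i => by rw [add_comm]
    rw [heq]
    exact hS y hy
  -- decomposition g = head + tail on Ω
  have hdec : ∀ y ∈ Ω, g y = (∑ i ∈ Finset.range n, d i * φ i y) + t y := by
    intro y hy
    have hsum : Summable fun ℓ => d ℓ * φ ℓ y := ((hg y hy).summable)
    have := Summable.sum_add_tsum_nat_add n hsum
    rw [(hg y hy).tsum_eq] at this
    exact this.symm
  -- reproduction: the interpolation operator reproduces φ_j for j < n
  choose a haa using hu_span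
  have claim : ∀ (j : Fin n) (y : X), ∑ k, φ (j : ℕ) (pts k) * u k y = φ (j : ℕ) y := by
    intro j y
    set A : Matrix (Fin n) (Fin n) ℝ := fun k m => a k m with hA
    set B : Matrix (Fin n) (Fin n) ℝ := fun m k => φ (m : ℕ) (pts k) with hB
    have hAB : A * B = 1 := by
      ext k j'
      have h1 := (haa k (pts j')).symm.trans (hu_card k j')
      rw [Matrix.mul_apply, Matrix.one_apply]
      simpa [hA, hB] using h1
    have hBA : B * A = 1 := mul_eq_one_comm.mp hAB
    calc ∑ k, φ (j : ℕ) (pts k) * u k y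
        = ∑ k, ∑ m, B j k * A k m * φ (m : ℕ) y := by
          refine Finset.sum_congr rfl fun k _ => ?_
          rw [haa k y, Finset.mul_sum]
          exact Finset.sum_congr rfl fun m _ => by ring
      _ = ∑ m, (∑ k, B j k * A k m) * φ (m : ℕ) y := by
          rw [Finset.sum_comm]
          exact Finset.sum_congr rfl fun m _ => by rw [Finset.sum_mul]
      _ = ∑ m, (B * A) j m * φ (m : ℕ) y := by
          exact Finset.sum_congr rfl fun m _ => by rw [Matrix.mul_apply]
      _ = φ (j : ℕ) y := by
          rw [hBA]
          simp [Matrix.one_apply]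
  -- head reproduction in aggregated form
  have hhead : ∑ k, (∑ i ∈ Finset.range n, d i * φ i (pts k)) * u k x
      = ∑ i ∈ Finset.range n, d i * φ i x := by
    calc ∑ k, (∑ i ∈ Finset.range n, d i * φ i (pts k)) * u k x
        = ∑ k, ∑ i ∈ Finset.range n, d i * (φ i (pts k) * u k x) := by
          refine Finset.sum_congr rfl fun k _ => ?_
          rw [Finset.sum_mul]
          exact Finset.sum_congr rfl fun i _ => by ring
      _ = ∑ i ∈ Finset.range n, ∑ k, d i * (φ i (pts k) * u k x) := Finset.sum_comm
      _ = ∑ i ∈ Finset.range n, d i * ∑ k, φ i (pts k) * u k x := by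
          exact Finset.sum_congr rfl fun i _ => by rw [Finset.mul_sum]
      _ = ∑ i ∈ Finset.range n, d i * φ i x := by
          refine Finset.sum_congr rfl fun i hi => ?_
          have hi' : i < n := Finset.mem_range.mp hi
          rw [claim ⟨i, hi'⟩ x]
  -- compute the interpolant
  have hP : ∑ k, g (pts k) * u k x
      = (∑ i ∈ Finset.range n, d i * φ i x) + ∑ k, t (pts k) * u k x := by
    have : ∀ k : Fin n, g (pts k) * u k x
        = (∑ i ∈ Finset.range n, d i * φ i (pts k)) * u k x + t (pts k) * u k x := by
      intro k
      rw [hdec (pts k) (hpts k)]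
      ring
    rw [Finset.sum_congr rfl fun k _ => this k, Finset.sum_add_distrib, hhead]
  -- final estimate
  have hgx := hdec x hx
  have key : g x - ∑ k, g (pts k) * u k x = t x - ∑ k, t (pts k) * u k x := by
    rw [hgx, hP]; ring
  rw [key]
  have h1 : |t x - ∑ k, t (pts k) * u k x| ≤ |t x| + ∑ k, |t (pts k)| * |u k x| := by
    refine (abs_sub _ _).trans ?_
    gcongr
    refine (Finset.abs_sum_le_sum_abs _ _).trans ?_
    exact le_of_eq (Finset.sum_congr rfl fun k _ => abs_mul _ _)
  have h2 : ∑ k, |t (pts k)| * |u k x| ≤ M * S * ∑ k, |u k x| := by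
    rw [Finset.mul_sum]
    refine Finset.sum_le_sum fun k _ => ?_
    exact mul_le_mul_of_nonneg_right (htail (pts k) (hpts k)) (abs_nonneg _)
  have h3 : M * S * ∑ k, |u k x| ≤ M * S * Λ :=
    mul_le_mul_of_nonneg_left (hΛ x hx) (mul_nonneg hM0 hS0)
  have h4 := htail x hx
  nlinarith [h1, h2, h3, h4]

/-- uniform bound for the minimum-norm (kernel) interpolant `s` of
`f ∈ H_K(Ω)` at points `x_1,…,x_n`:
`sup_Ω |f − s| ≤ 2 ‖f‖ (1 + Λ_φ(X_n)) sup_Ω (Σ_{ℓ>n} φ_ℓ²)^{1/2}`. -/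
theorem kernel_interpolant_error_bound
    {X : Type*} (Ω : Set X) (φ : ℕ → X → ℝ) (f : X → ℝ) (c : ℕ → ℝ)
    -- f ∈ H_K(Ω): square-summable coefficients, pointwise convergent expansion
    (hc : Summable (fun ℓ => (c ℓ) ^ 2))
    (hφ : ∀ x ∈ Ω, Summable (fun ℓ => (φ ℓ x) ^ 2))
    (hf : ∀ x ∈ Ω, HasSum (fun ℓ => c ℓ * φ ℓ x) (f x))
    (n : ℕ) (pts : Fin n → X) (hpts : ∀ k, pts k ∈ Ω)
    -- Lagrange basis functions u_k ∈ span{φ_0,…,φ_{n-1}} with u_k(x_m) = δ_{km},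
    -- whose existence encodes invertibility of Φ_{X_n}
    (u : Fin n → X → ℝ)
    (hu_span : ∀ k, ∃ a : Fin n → ℝ, ∀ x, u k x = ∑ m, a m * φ (m : ℕ) x)
    (hu_card : ∀ k m, u k (pts m) = if k = m then (1 : ℝ) else 0)
    -- the kernel interpolant s: the minimum-norm element of H_K(Ω) interpolating f
    (s : X → ℝ) (b : ℕ → ℝ)
    (hb : Summable (fun ℓ => (b ℓ) ^ 2))
    (hs : ∀ x ∈ Ω, HasSum (fun ℓ => b ℓ * φ ℓ x) (s x))
    (hs_interp : ∀ k, s (pts k) = f (pts k))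
    (hs_min : ∀ (g : X → ℝ) (d : ℕ → ℝ), Summable (fun ℓ => (d ℓ) ^ 2) →
      (∀ x ∈ Ω, HasSum (fun ℓ => d ℓ * φ ℓ x) (g x)) →
      (∀ k, g (pts k) = f (pts k)) →
      (∑' ℓ, (b ℓ) ^ 2) ≤ ∑' ℓ, (d ℓ) ^ 2)
    -- Lebesgue constant and uniform tail bound
    (Λ S : ℝ)
    (hΛ : ∀ x ∈ Ω, ∑ k, |u k x| ≤ Λ)
    (hS : ∀ x ∈ Ω, Real.sqrt (∑' ℓ, (φ (n + ℓ) x) ^ 2) ≤ S) :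
    ∀ x ∈ Ω, |f x - s x| ≤ 2 * Real.sqrt (∑' ℓ, (c ℓ) ^ 2) * (1 + Λ) * S := by
  intro x hx
  have herrf := single_err Ω φ hφ n pts hpts u hu_span hu_card Λ S hΛ hS f c hc hf x hx
  have herrs := single_err Ω φ hφ n pts hpts u hu_span hu_card Λ S hΛ hS s b hb hs x hx
  have hPeq : ∑ k, s (pts k) * u k x = ∑ k, f (pts k) * u k x :=
    Finset.sum_congr rfl fun k _ => by rw [hs_interp k]
  have hbc : Real.sqrt (∑' ℓ, b ℓ ^ 2) ≤ Real.sqrt (∑' ℓ, c ℓ ^ 2) :=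
    Real.sqrt_le_sqrt (hs_min f c hc hf fun k => rfl)
  have hS0 : 0 ≤ S := le_trans (Real.sqrt_nonneg _) (hS x hx)
  have hΛ0 : 0 ≤ Λ :=
    le_trans (Finset.sum_nonneg fun k _ => abs_nonneg _) (hΛ x hx)
  have htri : |f x - s x| ≤ |f x - ∑ k, f (pts k) * u k x| + |s x - ∑ k, s (pts k) * u k x| := by
    rw [hPeq]
    have : f x - s x = (f x - ∑ k, f (pts k) * u k x) - (s x - ∑ k, f (pts k) * u k x) := by
      ring
    rw [this]
    exact abs_sub _ _
  have hM0 : 0 ≤ Real.sqrt (∑' ℓ, b ℓ ^ 2) := Real.sqrt_nonneg _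
  have h1Λ : (0:ℝ) ≤ 1 + Λ := by linarith
  have h5 : Real.sqrt (∑' ℓ, b ℓ ^ 2) * (1 + Λ) * S ≤
      Real.sqrt (∑' ℓ, c ℓ ^ 2) * (1 + Λ) * S := by gcongr
  linarith [htri, herrf, herrs, h5]
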